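/- arXiv:1808.03837 — 2 statements merged into one kernel-verified Lean document; each statement's English description precedes it below -/
import Mathlib

section
/- Let m₁, m₂, m₃ > 0, let p₁, p₂, p₃ ∈ ℝ² be distinct, and let x₀ ∈ ℝ⁴ have position component not in {p₁, p₂, p₃}. Suppose xᵘ : ℝ → ℝ⁴ and xˢ : ℝ → ℝ⁴ are differentiable, satisfy (xᵘ)′(t) = f(xᵘ(t)) and (xˢ)′(t) = f(xˢ(t)) for all t ∈ ℝ with position components avoiding {p₁, p₂, p₃}, and satisfy xᵘ(t) → x₀ as t → −∞ and xˢ(t) → x₀ as t → +∞. If the states q = xᵘ(0) and p = xˢ(0) satisfy q₁ = p₁, q₂ = p₂, q₃ = p₃, and q₄ · p₄ > 0, then q = p; that is, the orbit of xᵘ meets the orbit of xˢ, so this point lies on an orbit homoclinic to x₀. -/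
/-- Euclidean distance in the configuration plane. -/
noncomputable def rdist (v p : ℝ × ℝ) : ℝ :=
  Real.sqrt ((v.1 - p.1) ^ 2 + (v.2 - p.2) ^ 2)

/-- The effective potential `Ω` of the CRFBP. -/
noncomputable def Omega (m₁ m₂ m₃ : ℝ) (p₁ p₂ p₃ : ℝ × ℝ) (v : ℝ × ℝ) : ℝ :=
  (v.1 ^ 2 + v.2 ^ 2) / 2 + m₁ / rdist v p₁ + m₂ / rdist v p₂ + m₃ / rdist v p₃

/-- The CRFBP vector field on states `(x, ẋ, y, ẏ)`. -/
noncomputable def crfbp (m₁ m₂ m₃ : ℝ) (p₁ p₂ p₃ : ℝ × ℝ) (v : Fin 4 → ℝ) :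
    Fin 4 → ℝ :=
  ![v 1,
    2 * v 3 + deriv (fun x => Omega m₁ m₂ m₃ p₁ p₂ p₃ (x, v 2)) (v 0),
    v 3,
    -2 * v 1 + deriv (fun y => Omega m₁ m₂ m₃ p₁ p₂ p₃ (v 0, y)) (v 2)]

/-- The Jacobi integral as a function of the state. -/
noncomputable def En (m₁ m₂ m₃ : ℝ) (p₁ p₂ p₃ : ℝ × ℝ) (v : Fin 4 → ℝ) : ℝ :=
  -((v 1) ^ 2 + (v 3) ^ 2) + 2 * Omega m₁ m₂ m₃ p₁ p₂ p₃ (v 0, v 2)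

lemma rdist_pos {v p : ℝ × ℝ} (h : v ≠ p) : 0 < rdist v p := by
  have h' : (v.1 - p.1) ^ 2 + (v.2 - p.2) ^ 2 ≠ 0 := by
    intro hc
    have h1 : (v.1 - p.1) ^ 2 = 0 ∧ (v.2 - p.2) ^ 2 = 0 := by
      constructor <;> nlinarith [sq_nonneg (v.1 - p.1), sq_nonneg (v.2 - p.2)]
    apply h
    have := pow_eq_zero_iff (n := 2) (by norm_num) |>.mp h1.1
    have := pow_eq_zero_iff (n := 2) (by norm_num) |>.mp h1.2
    exact Prod.ext (by linarith) (by linarith)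
  have hnn : 0 ≤ (v.1 - p.1) ^ 2 + (v.2 - p.2) ^ 2 := by positivity
  exact Real.sqrt_pos.mpr (lt_of_le_of_ne hnn (Ne.symm h'))

lemma rdist_diff {p : ℝ × ℝ} {v : ℝ × ℝ} (h : v ≠ p) :
    DifferentiableAt ℝ (fun w => rdist w p) v := by
  have hinner : DifferentiableAt ℝ (fun w : ℝ × ℝ => (w.1 - p.1) ^ 2 + (w.2 - p.2) ^ 2) v := by
    fun_prop
  have hne : (v.1 - p.1) ^ 2 + (v.2 - p.2) ^ 2 ≠ 0 := by
    have := rdist_pos h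
    intro hc
    simp [rdist, hc] at this
  exact hinner.sqrt hne

lemma omega_diff {m₁ m₂ m₃ : ℝ} {p₁ p₂ p₃ : ℝ × ℝ} {v : ℝ × ℝ}
    (hv : v ∉ ({p₁, p₂, p₃} : Set (ℝ × ℝ))) :
    DifferentiableAt ℝ (Omega m₁ m₂ m₃ p₁ p₂ p₃) v := by
  simp only [Set.mem_insert_iff, Set.mem_singleton_iff, not_or] at hv
  obtain ⟨h1, h2, h3⟩ := hv
  have d1 := rdist_diff h1
  have d2 := rdist_diff h2
  have d3 := rdist_diff h3
  have n1 := (rdist_pos h1).ne'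
  have n2 := (rdist_pos h2).ne'
  have n3 := (rdist_pos h3).ne'
  unfold Omega
  refine DifferentiableAt.add (DifferentiableAt.add (DifferentiableAt.add ?_ ?_) ?_) ?_
  · fun_prop
  · simp only [div_eq_mul_inv]; exact (d1.inv n1).const_mul m₁
  · simp only [div_eq_mul_inv]; exact (d2.inv n2).const_mul m₂
  · simp only [div_eq_mul_inv]; exact (d3.inv n3).const_mul m₃

lemma omega_partial_x {m₁ m₂ m₃ : ℝ} {p₁ p₂ p₃ : ℝ × ℝ} {v : ℝ × ℝ}
    (hv : v ∉ ({p₁, p₂, p₃} : Set (ℝ × ℝ))) :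
    HasDerivAt (fun x => Omega m₁ m₂ m₃ p₁ p₂ p₃ (x, v.2))
      (fderiv ℝ (Omega m₁ m₂ m₃ p₁ p₂ p₃) v (1, 0)) v.1 := by
  have h : HasFDerivAt (Omega m₁ m₂ m₃ p₁ p₂ p₃)
      (fderiv ℝ (Omega m₁ m₂ m₃ p₁ p₂ p₃) v) v := (omega_diff hv).hasFDerivAt
  have hc : HasDerivAt (fun x : ℝ => ((x, v.2) : ℝ × ℝ)) ((1 : ℝ), (0 : ℝ)) v.1 :=
    (hasDerivAt_id v.1).prodMk (hasDerivAt_const v.1 v.2)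
  have h2 := h.comp_hasDerivAt v.1 hc
  simpa [Function.comp_def] using h2

lemma omega_partial_y {m₁ m₂ m₃ : ℝ} {p₁ p₂ p₃ : ℝ × ℝ} {v : ℝ × ℝ}
    (hv : v ∉ ({p₁, p₂, p₃} : Set (ℝ × ℝ))) :
    HasDerivAt (fun y => Omega m₁ m₂ m₃ p₁ p₂ p₃ (v.1, y))
      (fderiv ℝ (Omega m₁ m₂ m₃ p₁ p₂ p₃) v (0, 1)) v.2 := by
  have h : HasFDerivAt (Omega m₁ m₂ m₃ p₁ p₂ p₃)
      (fderiv ℝ (Omega m₁ m₂ m₃ p₁ p₂ p₃) v) v := (omega_diff hv).hasFDerivAt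
  have hc : HasDerivAt (fun y : ℝ => ((v.1, y) : ℝ × ℝ)) ((0 : ℝ), (1 : ℝ)) v.2 :=
    (hasDerivAt_const v.2 v.1).prodMk (hasDerivAt_id v.2)
  have h2 := h.comp_hasDerivAt v.2 hc
  simpa [Function.comp_def] using h2

/-- Energy is conserved along any orbit avoiding the primaries. -/
lemma energy_const {m₁ m₂ m₃ : ℝ} {p₁ p₂ p₃ : ℝ × ℝ} {x : ℝ → Fin 4 → ℝ}
    (hx : ∀ t : ℝ, HasDerivAt x (crfbp m₁ m₂ m₃ p₁ p₂ p₃ (x t)) t)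
    (hAvoid : ∀ t : ℝ, (x t 0, x t 2) ∉ ({p₁, p₂, p₃} : Set (ℝ × ℝ)))
    (s t : ℝ) : En m₁ m₂ m₃ p₁ p₂ p₃ (x s) = En m₁ m₂ m₃ p₁ p₂ p₃ (x t) := by
  set Ω := Omega m₁ m₂ m₃ p₁ p₂ p₃
  have key : ∀ u : ℝ, HasDerivAt (fun r => En m₁ m₂ m₃ p₁ p₂ p₃ (x r)) 0 u := by
    intro u
    have hcoord : ∀ i, HasDerivAt (fun r => x r i) (crfbp m₁ m₂ m₃ p₁ p₂ p₃ (x u) i) u :=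
      hasDerivAt_pi.mp (hx u)
    have h0 := hcoord 0
    have h1 := hcoord 1
    have h2 := hcoord 2
    have h3 := hcoord 3
    simp only [crfbp, Matrix.cons_val_zero, Matrix.cons_val_one, Matrix.head_cons,
      Matrix.cons_val_two, Matrix.tail_cons, Matrix.cons_val_three] at h0 h1 h2 h3
    set v : ℝ × ℝ := (x u 0, x u 2) with hvdef
    have hvu := hAvoid u
    set Dx := fderiv ℝ Ω v (1, 0) with hDx
    set Dy := fderiv ℝ Ω v (0, 1) with hDy
    have hpx : deriv (fun a => Ω (a, x u 2)) (x u 0) = Dx := (omega_partial_x hvu).deriv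
    have hpy : deriv (fun b => Ω (x u 0, b)) (x u 2) = Dy := (omega_partial_y hvu).deriv
    rw [hpx] at h1
    rw [hpy] at h3
    -- derivative of the potential term
    have hpos : HasDerivAt (fun r => (x r 0, x r 2)) ((x u 1, x u 3) : ℝ × ℝ) u :=
      h0.prodMk h2
    have hΩd : HasDerivAt (fun r => Ω (x r 0, x r 2))
        (fderiv ℝ Ω v (x u 1, x u 3)) u := by
      have hF : HasFDerivAt Ω (fderiv ℝ Ω v) v :=
        (omega_diff (m₁ := m₁) (m₂ := m₂) (m₃ := m₃) hvu).hasFDerivAt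
      have h2 := hF.comp_hasDerivAt u hpos
      simpa [Function.comp_def] using h2
    have hsplit : fderiv ℝ Ω v (x u 1, x u 3) = x u 1 * Dx + x u 3 * Dy := by
      have : ((x u 1, x u 3) : ℝ × ℝ) = x u 1 • ((1 : ℝ), (0 : ℝ)) + x u 3 • ((0:ℝ), (1:ℝ)) := by
        simp [Prod.ext_iff]
      rw [this, map_add, map_smul, map_smul, hDx, hDy]
      simp [smul_eq_mul]
    rw [hsplit] at hΩd
    have hE : HasDerivAt (fun r => En m₁ m₂ m₃ p₁ p₂ p₃ (x r))
        (-(2 * x u 1 * (2 * x u 3 + Dx) + 2 * x u 3 * (-2 * x u 1 + Dy))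
          + 2 * (x u 1 * Dx + x u 3 * Dy)) u := by
      have hsq1 : HasDerivAt (fun r => (x r 1) ^ 2) (2 * x u 1 * (2 * x u 3 + Dx)) u := by
        simpa [mul_comm, mul_assoc, mul_left_comm] using (h1.fun_pow 2)
      have hsq3 : HasDerivAt (fun r => (x r 3) ^ 2) (2 * x u 3 * (-2 * x u 1 + Dy)) u := by
        simpa [mul_comm, mul_assoc, mul_left_comm] using (h3.fun_pow 2)
      exact ((hsq1.add hsq3).neg).add (hΩd.const_mul 2)
    have : (-(2 * x u 1 * (2 * x u 3 + Dx) + 2 * x u 3 * (-2 * x u 1 + Dy))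
        + 2 * (x u 1 * Dx + x u 3 * Dy)) = 0 := by ring
    rwa [this] at hE
  exact is_const_of_deriv_eq_zero (fun u => (key u).differentiableAt)
    (fun u => (key u).deriv) s t

/-- The energy is continuous at states whose position avoids the primaries. -/
lemma energy_continuousAt {m₁ m₂ m₃ : ℝ} {p₁ p₂ p₃ : ℝ × ℝ} {w : Fin 4 → ℝ}
    (hw : (w 0, w 2) ∉ ({p₁, p₂, p₃} : Set (ℝ × ℝ))) :
    ContinuousAt (En m₁ m₂ m₃ p₁ p₂ p₃) w := by
  have hΩ : ContinuousAt (Omega m₁ m₂ m₃ p₁ p₂ p₃) (w 0, w 2) :=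
    (omega_diff hw).continuousAt
  have hproj : ContinuousAt (fun v : Fin 4 → ℝ => (v 0, v 2)) w := by fun_prop
  have h2 : ContinuousAt (fun v : Fin 4 → ℝ => Omega m₁ m₂ m₃ p₁ p₂ p₃ (v 0, v 2)) w := by
    have := ContinuousAt.comp (g := Omega m₁ m₂ m₃ p₁ p₂ p₃)
      (f := fun v : Fin 4 → ℝ => (v 0, v 2)) hΩ hproj
    simpa [Function.comp_def] using this
  have h1 : ContinuousAt (fun v : Fin 4 → ℝ => -((v 1) ^ 2 + (v 3) ^ 2)) w := by fun_prop
  exact h1.add (h2.const_mul 2)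

/-- **Mining theorem for homoclinic connections**: if an orbit on the unstable
manifold of `x₀` and an orbit on the stable manifold of `x₀` reach states that
agree in the first three coordinates and whose fourth coordinates share the same
sign, then these states coincide, i.e. the point lies on an orbit homoclinic to
`x₀`. -/
theorem unstable_stable_intersection (m₁ m₂ m₃ : ℝ) (hm₁ : 0 < m₁)
    (hm₂ : 0 < m₂) (hm₃ : 0 < m₃) (p₁ p₂ p₃ : ℝ × ℝ)
    (h₁₂ : p₁ ≠ p₂) (h₁₃ : p₁ ≠ p₃) (h₂₃ : p₂ ≠ p₃)
    (x₀ : Fin 4 → ℝ) (hx₀ : (x₀ 0, x₀ 2) ∉ ({p₁, p₂, p₃} : Set (ℝ × ℝ)))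
    (xu xs : ℝ → Fin 4 → ℝ)
    (hxu : ∀ t : ℝ, HasDerivAt xu (crfbp m₁ m₂ m₃ p₁ p₂ p₃ (xu t)) t)
    (hxuAvoid : ∀ t : ℝ, (xu t 0, xu t 2) ∉ ({p₁, p₂, p₃} : Set (ℝ × ℝ)))
    (hxs : ∀ t : ℝ, HasDerivAt xs (crfbp m₁ m₂ m₃ p₁ p₂ p₃ (xs t)) t)
    (hxsAvoid : ∀ t : ℝ, (xs t 0, xs t 2) ∉ ({p₁, p₂, p₃} : Set (ℝ × ℝ)))
    (hlimu : Filter.Tendsto xu Filter.atBot (nhds x₀))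
    (hlims : Filter.Tendsto xs Filter.atTop (nhds x₀))
    (h0 : xu 0 0 = xs 0 0) (h1 : xu 0 1 = xs 0 1) (h2 : xu 0 2 = xs 0 2)
    (hsign : xu 0 3 * xs 0 3 > 0) :
    xu 0 = xs 0 := by
  set E := En m₁ m₂ m₃ p₁ p₂ p₃ with hE
  have hEcont : ContinuousAt E x₀ := energy_continuousAt hx₀
  -- E (xu 0) = E x₀
  have hEu : E (xu 0) = E x₀ := by
    have htend : Filter.Tendsto (fun t => E (xu t)) Filter.atBot (nhds (E x₀)) :=
      hEcont.tendsto.comp hlimu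
    have hconst : (fun t => E (xu t)) = fun _ => E (xu 0) := by
      funext t; exact energy_const hxu hxuAvoid t 0
    rw [hconst] at htend
    exact tendsto_nhds_unique tendsto_const_nhds htend
  have hEs : E (xs 0) = E x₀ := by
    have htend : Filter.Tendsto (fun t => E (xs t)) Filter.atTop (nhds (E x₀)) :=
      hEcont.tendsto.comp hlims
    have hconst : (fun t => E (xs t)) = fun _ => E (xs 0) := by
      funext t; exact energy_const hxs hxsAvoid t 0
    rw [hconst] at htend
    exact tendsto_nhds_unique tendsto_const_nhds htend
  have hEeq : E (xu 0) = E (xs 0) := hEu.trans hEs.symm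
  have hsq : (xu 0 3) ^ 2 = (xs 0 3) ^ 2 := by
    have : Omega m₁ m₂ m₃ p₁ p₂ p₃ (xu 0 0, xu 0 2)
        = Omega m₁ m₂ m₃ p₁ p₂ p₃ (xs 0 0, xs 0 2) := by rw [h0, h2]
    simp only [hE, En] at hEeq
    rw [h1, this] at hEeq
    linarith
  have h3 : xu 0 3 = xs 0 3 := by
    have habs : xu 0 3 = xs 0 3 ∨ xu 0 3 = -(xs 0 3) := sq_eq_sq_iff_eq_or_eq_neg.mp hsq
    rcases habs with h | h
    · exact h
    · exfalso; nlinarith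
  funext i
  fin_cases i
  · exact h0
  · exact h1
  · exact h2
  · exact h3
end

section
/- Work in the algebra of formal power series in two variables over ℂ, and let ∇_rad denote the linear operator on formal power series that multiplies the coefficient of z₁^m z₂^n by (m + n). Let P be a formal power series whose constant coefficient p_{0,0} is nonzero, let α ∈ ℂ, and let q₀ ∈ ℂ. Then there exists a unique formal power series Q with constant coefficient q₀ satisfying P · ∇_rad Q = α · Q · ∇_rad P, where · denotes the Cauchy product of formal power series. -/
/-- The radial gradient on formal power series in two variables: the linear
operator multiplying the coefficient of `z₁^m z₂^n` by `m + n`. -/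
noncomputable def radGrad (P : MvPowerSeries (Fin 2) ℂ) :
    MvPowerSeries (Fin 2) ℂ :=
  fun d => ((d 0 + d 1 : ℕ) : ℂ) * MvPowerSeries.coeff d P

open MvPowerSeries Finset

lemma deg_ne_zero {d : Fin 2 →₀ ℕ} (hd : d ≠ 0) : d 0 + d 1 ≠ 0 := by
  intro h
  have h0 : d 0 = 0 := by omega
  have h1 : d 1 = 0 := by omega
  apply hd
  ext i
  fin_cases i
  · simpa using h0
  · simpa using h1

noncomputable def qc (P : MvPowerSeries (Fin 2) ℂ) (α q₀ : ℂ) :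
    (Fin 2 →₀ ℕ) → ℂ
  | d =>
    if hd : d = 0 then q₀
    else
      (α * q₀ * ((d 0 + d 1 : ℕ) : ℂ) * P d +
        ∑ p ∈ (antidiagonal d).attach,
          if h : p.1.1 ≠ 0 ∧ p.1.2 ≠ 0 then
            ((p.1.2 0 + p.1.2 1 : ℕ) : ℂ) *
              (α * qc P α q₀ p.1.1 * P p.1.2 - P p.1.1 * qc P α q₀ p.1.2)
          else 0) /
      (P 0 * ((d 0 + d 1 : ℕ) : ℂ))
  termination_by d => d 0 + d 1
  decreasing_by
  · have hm : p.1.1 + p.1.2 = d := Finset.HasAntidiagonal.mem_antidiagonal.mp p.2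
    have h2 : p.1.2 0 + p.1.2 1 ≠ 0 := deg_ne_zero h.2
    have e0 : p.1.1 0 + p.1.2 0 = d 0 := by rw [← Finsupp.add_apply, hm]
    have e1 : p.1.1 1 + p.1.2 1 = d 1 := by rw [← Finsupp.add_apply, hm]
    show p.1.1 0 + p.1.1 1 < d 0 + d 1
    omega
  · have hm : p.1.1 + p.1.2 = d := Finset.HasAntidiagonal.mem_antidiagonal.mp p.2
    have h2 : p.1.1 0 + p.1.1 1 ≠ 0 := deg_ne_zero h.1
    have e0 : p.1.1 0 + p.1.2 0 = d 0 := by rw [← Finsupp.add_apply, hm]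
    have e1 : p.1.1 1 + p.1.2 1 = d 1 := by rw [← Finsupp.add_apply, hm]
    show p.1.2 0 + p.1.2 1 < d 0 + d 1
    omega

lemma qc_zero (P : MvPowerSeries (Fin 2) ℂ) (α q₀ : ℂ) : qc P α q₀ 0 = q₀ := by
  rw [qc]
  simp

lemma qc_spec (P : MvPowerSeries (Fin 2) ℂ) (α q₀ : ℂ) (hP : P 0 ≠ 0)
    {d : Fin 2 →₀ ℕ} (hd : d ≠ 0) :
    P 0 * qc P α q₀ d * ((d 0 + d 1 : ℕ) : ℂ) =
      α * q₀ * ((d 0 + d 1 : ℕ) : ℂ) * P d +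
        ∑ p ∈ antidiagonal d,
          if p.1 ≠ 0 ∧ p.2 ≠ 0 then
            ((p.2 0 + p.2 1 : ℕ) : ℂ) *
              (α * qc P α q₀ p.1 * P p.2 - P p.1 * qc P α q₀ p.2)
          else 0 := by
  have hn : ((d 0 + d 1 : ℕ) : ℂ) ≠ 0 := Nat.cast_ne_zero.mpr (deg_ne_zero hd)
  conv_lhs => rw [qc]
  rw [dif_neg hd]
  simp only [dite_eq_ite]
  rw [Finset.sum_attach (antidiagonal d)
      (fun p => if p.1 ≠ 0 ∧ p.2 ≠ 0 then
        ((p.2 0 + p.2 1 : ℕ) : ℂ) *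
          (α * qc P α q₀ p.1 * P p.2 - P p.1 * qc P α q₀ p.2) else 0)]
  have habs : ∀ X : ℂ, P 0 * (X / (P 0 * ((d 0 + d 1 : ℕ) : ℂ))) *
      ((d 0 + d 1 : ℕ) : ℂ) = X := by
    intro X
    have hPn : P 0 * ((d 0 + d 1 : ℕ) : ℂ) ≠ 0 := mul_ne_zero hP hn
    calc P 0 * (X / (P 0 * ((d 0 + d 1 : ℕ) : ℂ))) * ((d 0 + d 1 : ℕ) : ℂ)
        = X * ((P 0 * ((d 0 + d 1 : ℕ) : ℂ)) / (P 0 * ((d 0 + d 1 : ℕ) : ℂ))) := by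
          ring
      _ = X := by rw [div_self hPn, mul_one]
  exact habs _

lemma key (P Q : MvPowerSeries (Fin 2) ℂ) (α : ℂ) {d : Fin 2 →₀ ℕ} (hd : d ≠ 0) :
    MvPowerSeries.coeff d (P * radGrad Q) =
        MvPowerSeries.coeff d (α • (Q * radGrad P)) ↔
      P 0 * Q d * ((d 0 + d 1 : ℕ) : ℂ) =
        α * Q 0 * ((d 0 + d 1 : ℕ) : ℂ) * P d +
          ∑ p ∈ antidiagonal d,
            if p.1 ≠ 0 ∧ p.2 ≠ 0 then
              ((p.2 0 + p.2 1 : ℕ) : ℂ) * (α * Q p.1 * P p.2 - P p.1 * Q p.2)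
            else 0 := by
  classical
  have h1 : MvPowerSeries.coeff d (P * radGrad Q) =
      ∑ p ∈ antidiagonal d, P p.1 * (((p.2 0 + p.2 1 : ℕ) : ℂ) * Q p.2) := by
    rw [MvPowerSeries.coeff_mul]; rfl
  have h2 : MvPowerSeries.coeff d (α • (Q * radGrad P)) =
      α * ∑ p ∈ antidiagonal d, Q p.1 * (((p.2 0 + p.2 1 : ℕ) : ℂ) * P p.2) := by
    rw [map_smul, smul_eq_mul, MvPowerSeries.coeff_mul]; rfl
  rw [h1, h2, Finset.mul_sum, ← sub_eq_zero, ← Finset.sum_sub_distrib]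
  have hsplit : ∀ p ∈ antidiagonal d,
      P p.1 * (((p.2 0 + p.2 1 : ℕ) : ℂ) * Q p.2) -
        α * (Q p.1 * (((p.2 0 + p.2 1 : ℕ) : ℂ) * P p.2)) =
      (if p = ((0 : Fin 2 →₀ ℕ), d) then
        P p.1 * (((p.2 0 + p.2 1 : ℕ) : ℂ) * Q p.2) -
          α * (Q p.1 * (((p.2 0 + p.2 1 : ℕ) : ℂ) * P p.2)) else 0) +
      (if p.1 ≠ 0 ∧ p.2 ≠ 0 then
        -(((p.2 0 + p.2 1 : ℕ) : ℂ) * (α * Q p.1 * P p.2 - P p.1 * Q p.2)) else 0) := by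
    intro p hp
    rw [Finset.HasAntidiagonal.mem_antidiagonal] at hp
    by_cases h0 : p = ((0 : Fin 2 →₀ ℕ), d)
    · have : p.1 = 0 := by rw [h0]
      rw [if_pos h0, if_neg (by simp [this])]
      ring
    · have hp1 : p.1 ≠ 0 := by
        intro h
        apply h0
        have : p.2 = d := by rwa [h, zero_add] at hp
        exact Prod.ext h this
      rw [if_neg h0]
      by_cases h2 : p.2 = 0
      · rw [if_neg (by simp [h2])]
        simp [h2]
      · rw [if_pos ⟨hp1, h2⟩]
        ring
  rw [Finset.sum_congr rfl hsplit, Finset.sum_add_distrib,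
    Finset.sum_ite_eq' (antidiagonal d) ((0 : Fin 2 →₀ ℕ), d)]
  rw [if_pos (by rw [Finset.HasAntidiagonal.mem_antidiagonal, zero_add])]
  have hneg : ∑ p ∈ antidiagonal d,
      (if p.1 ≠ 0 ∧ p.2 ≠ 0 then
        -(((p.2 0 + p.2 1 : ℕ) : ℂ) * (α * Q p.1 * P p.2 - P p.1 * Q p.2)) else 0)
      = -∑ p ∈ antidiagonal d,
      (if p.1 ≠ 0 ∧ p.2 ≠ 0 then
        ((p.2 0 + p.2 1 : ℕ) : ℂ) * (α * Q p.1 * P p.2 - P p.1 * Q p.2) else 0) := by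
    rw [← Finset.sum_neg_distrib]
    exact Finset.sum_congr rfl fun p _ => by split_ifs <;> simp
  rw [hneg]
  simp only
  constructor <;> intro h <;> linear_combination h

lemma coeff_zero_eq (P Q : MvPowerSeries (Fin 2) ℂ) (α : ℂ) :
    MvPowerSeries.coeff 0 (P * radGrad Q) =
      MvPowerSeries.coeff 0 (α • (Q * radGrad P)) := by
  classical
  rw [map_smul, smul_eq_mul, MvPowerSeries.coeff_mul, MvPowerSeries.coeff_mul,
    Finsupp.antidiagonal_zero]
  simp [radGrad, MvPowerSeries.coeff_apply]

/-- **Well-definedness of the automatic differentiation recursion**: for a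
formal power series `P` with nonzero constant coefficient, any `α ∈ ℂ` and any
prescribed constant coefficient `q₀`, there is a unique formal power series `Q`
with constant coefficient `q₀` satisfying `P · ∇_rad Q = α · Q · ∇_rad P`. -/
theorem radGrad_power_recursion_unique (P : MvPowerSeries (Fin 2) ℂ)
    (hP : MvPowerSeries.constantCoeff P ≠ 0) (α q₀ : ℂ) :
    ∃! Q : MvPowerSeries (Fin 2) ℂ,
      MvPowerSeries.constantCoeff Q = q₀ ∧
        P * radGrad Q = α • (Q * radGrad P) := by
  classical
  have hP' : P 0 ≠ 0 := hP
  refine ⟨(qc P α q₀ : MvPowerSeries (Fin 2) ℂ), ⟨qc_zero P α q₀, ?_⟩, ?_⟩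
  · apply MvPowerSeries.ext
    intro d
    by_cases hd : d = 0
    · subst hd; exact coeff_zero_eq P _ α
    · refine (key P _ α hd).mpr ?_
      rw [qc_zero]
      exact qc_spec P α q₀ hP' hd
  · rintro Q ⟨hQ0, hQeq⟩
    have hQ0' : Q 0 = q₀ := hQ0
    have main : ∀ N, ∀ d : Fin 2 →₀ ℕ, d 0 + d 1 = N → Q d = qc P α q₀ d := by
      intro N
      induction N using Nat.strong_induction_on with
      | _ N ih =>
        intro d hdN
        by_cases hd : d = 0
        · subst hd; rw [qc_zero]; exact hQ0'
        · have h1 := (key P Q α hd).mp (by rw [hQeq])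
          have h2 := qc_spec P α q₀ hP' hd
          have hsum : (∑ p ∈ antidiagonal d,
              if p.1 ≠ 0 ∧ p.2 ≠ 0 then
                ((p.2 0 + p.2 1 : ℕ) : ℂ) * (α * Q p.1 * P p.2 - P p.1 * Q p.2)
              else 0)
              = ∑ p ∈ antidiagonal d,
              if p.1 ≠ 0 ∧ p.2 ≠ 0 then
                ((p.2 0 + p.2 1 : ℕ) : ℂ) *
                  (α * qc P α q₀ p.1 * P p.2 - P p.1 * qc P α q₀ p.2)
              else 0 := by
            apply Finset.sum_congr rfl
            intro p hp
            rw [Finset.HasAntidiagonal.mem_antidiagonal] at hp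
            split_ifs with h
            · have e0 : p.1 0 + p.2 0 = d 0 := by rw [← Finsupp.add_apply, hp]
              have e1 : p.1 1 + p.2 1 = d 1 := by rw [← Finsupp.add_apply, hp]
              have l1 : p.1 0 + p.1 1 < N := by have := deg_ne_zero h.2; omega
              have l2 : p.2 0 + p.2 1 < N := by have := deg_ne_zero h.1; omega
              rw [ih _ l1 p.1 rfl, ih _ l2 p.2 rfl]
            · rfl
          rw [hsum, hQ0'] at h1
          have heq := h1.trans h2.symm
          have hn : ((d 0 + d 1 : ℕ) : ℂ) ≠ 0 := Nat.cast_ne_zero.mpr (deg_ne_zero hd)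
          exact mul_left_cancel₀ hP' (mul_right_cancel₀ hn heq)
    exact funext fun d => main (d 0 + d 1) d rfl
end
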